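/- Let 1 ≤ r ≤ a and 1 ≤ s < v ≤ u ≤ b be indices such that: k_r > l_s; if s > 1 then l_{s−1} > k_r; if r < a then l_u > k_{r+1} and moreover u = b or k_{r+1} > l_{u+1}; if r = a then u = b. Assume that l_s, l_{s+1}, …, l_{v−1} all belong to I and that l_v belongs to J. Then inv(i_1, …, i_l, k_1, …, k_{r−1}, l_v, k_{r+1}, …, k_a) = inv(i_1, …, i_l, k_1, …, k_a) − (v − s). -/

import Mathlib

/-- The number of inversions of a finite sequence `c` of natural numbers:
the number of pairs of positions `(p, q)` with `p < q` and `c p < c q`.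
This is the minimal number of transpositions of neighbouring entries needed
to bring the sequence into strictly decreasing order. -/
def numInv {N : ℕ} (c : Fin N → ℕ) : ℕ :=
  (Finset.univ.filter (fun pq : Fin N × Fin N => pq.1 < pq.2 ∧ c pq.1 < c pq.2)).card


lemma numInv_def {N : ℕ} (c : Fin N → ℕ) : numInv c =
    (Finset.univ.filter (fun pq : Fin N × Fin N => pq.1 < pq.2 ∧ c pq.1 < c pq.2)).card := rfl

lemma numInv_split {N : ℕ} (g : Fin N → ℕ) (p0 : Fin N) :
    numInv g = (∑ p : Fin N, if p < p0 ∧ g p < g p0 then 1 else 0)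
      + ((∑ q ∈ Finset.univ.erase p0, if p0 < q ∧ g p0 < g q then 1 else 0)
      + ∑ p ∈ Finset.univ.erase p0, ∑ q ∈ Finset.univ.erase p0,
          if p < q ∧ g p < g q then 1 else 0) := by
  classical
  have h1 : numInv g = ∑ p : Fin N, ∑ q : Fin N, if p < q ∧ g p < g q then 1 else 0 := by
    rw [numInv, Finset.card_filter, Fintype.sum_prod_type]
  rw [h1]
  have h2 : ∀ p : Fin N, (∑ q : Fin N, if p < q ∧ g p < g q then 1 else 0)
      = (if p < p0 ∧ g p < g p0 then 1 else 0)
        + ∑ q ∈ Finset.univ.erase p0, if p < q ∧ g p < g q then 1 else 0 :=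
    fun p => (Finset.add_sum_erase _ _ (Finset.mem_univ p0)).symm
  rw [Finset.sum_congr rfl (fun p _ => h2 p), Finset.sum_add_distrib]
  congr 1
  exact (Finset.add_sum_erase _
    (fun p => ∑ q ∈ Finset.univ.erase p0, if p < q ∧ g p < g q then 1 else 0)
    (Finset.mem_univ p0)).symm

lemma numInv_update {N : ℕ} (c : Fin N → ℕ) (p0 : Fin N) (x : ℕ) (d : ℕ)
    (hR : ∀ q, p0 < q → ¬ c p0 < c q)
    (hR' : ∀ q, p0 < q → ¬ x < c q)
    (hL : (Finset.univ.filter (fun p : Fin N => p < p0 ∧ c p < c p0)).card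
        = (Finset.univ.filter (fun p : Fin N => p < p0 ∧ c p < x)).card + d) :
    numInv (Function.update c p0 x) + d = numInv c := by
  classical
  rw [numInv_split c p0, numInv_split (Function.update c p0 x) p0]
  have e3 : (∑ p ∈ Finset.univ.erase p0, ∑ q ∈ Finset.univ.erase p0,
      if p < q ∧ Function.update c p0 x p < Function.update c p0 x q then 1 else 0)
      = ∑ p ∈ Finset.univ.erase p0, ∑ q ∈ Finset.univ.erase p0,
          if p < q ∧ c p < c q then 1 else 0 := by
    refine Finset.sum_congr rfl (fun p hp => Finset.sum_congr rfl (fun q hq => ?_))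
    rw [Function.update_of_ne (Finset.ne_of_mem_erase hp),
        Function.update_of_ne (Finset.ne_of_mem_erase hq)]
  have e2 : (∑ q ∈ Finset.univ.erase p0,
      if p0 < q ∧ Function.update c p0 x p0 < Function.update c p0 x q then 1 else 0) = 0 := by
    refine Finset.sum_eq_zero (fun q hq => ?_)
    rw [Function.update_of_ne (Finset.ne_of_mem_erase hq), Function.update_self]
    simp only [ite_eq_right_iff]
    exact fun h => absurd h.2 (hR' q h.1)
  have e2' : (∑ q ∈ Finset.univ.erase p0, if p0 < q ∧ c p0 < c q then 1 else 0) = 0 := by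
    refine Finset.sum_eq_zero (fun q hq => ?_)
    simp only [ite_eq_right_iff]
    exact fun h => absurd h.2 (hR q h.1)
  have e1 : (∑ p : Fin N, if p < p0 ∧ Function.update c p0 x p < Function.update c p0 x p0
        then 1 else 0)
      = ∑ p : Fin N, if p < p0 ∧ c p < x then 1 else 0 := by
    refine Finset.sum_congr rfl (fun p _ => ?_)
    by_cases hp : p = p0
    · subst hp; simp [lt_irrefl]
    · rw [Function.update_of_ne hp, Function.update_self]
  rw [e1, e2, e2', e3]
  rw [Finset.card_filter, Finset.card_filter] at hL
  omega

lemma append_update {l a : ℕ} (i : Fin l → ℕ) (k : Fin a → ℕ) (r : Fin a) (x : ℕ) :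
    Fin.append i (Function.update k r x)
      = Function.update (Fin.append i k) (Fin.natAdd l r) x := by
  funext p
  refine Fin.addCases (fun m => ?_) (fun j => ?_) p
  · rw [Fin.append_left, Function.update_of_ne, Fin.append_left]
    intro h
    have := congrArg Fin.val h
    simp only [Fin.coe_castAdd, Fin.coe_natAdd] at this
    omega
  · rw [Fin.append_right]
    by_cases hj : j = r
    · subst hj; rw [Function.update_self, Function.update_self]
    · rw [Function.update_of_ne hj, Function.update_of_ne, Fin.append_right]
      intro h
      apply hj
      have := congrArg Fin.val h
      simp only [Fin.coe_natAdd] at this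
      exact Fin.ext (by omega)

/-- Proposition 2.4 of the paper: if `l_s, …, l_{v-1} ∈ I` and `l_v ∈ J`, then replacing
`k_r` by `l_v` in the list `(i_1, …, i_l, k_1, …, k_a)` decreases the number of
inversions by exactly `v - s`. -/
theorem inversions_replace_drop
    (l a b : ℕ) (I J : Finset ℕ) (hdisj : Disjoint I J) (hIcard : I.card = l)
    (i : Fin l → ℕ) (hi : StrictAnti i) (hiI : Finset.image i Finset.univ = I)
    (ha : 1 ≤ a)
    (k : Fin a → ℕ) (hk : StrictAnti k) (hkJ : ∀ r, k r ∈ J)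
    (lv : Fin b → ℕ) (hlv : StrictAnti lv)
    (hlvIJ : Finset.image lv Finset.univ = (I ∪ J) \ Finset.image k Finset.univ)
    (r : Fin a) (s v u : Fin b)
    (hsv : s < v) (hvu : v ≤ u)
    -- `k_r > l_s`
    (h1 : k r > lv s)
    -- if `s > 1` then `l_{s-1} > k_r`
    (h2 : ∀ s' : Fin b, (s' : ℕ) + 1 = (s : ℕ) → lv s' > k r)
    -- if `r < a` then `l_u > k_{r+1}` and moreover `u = b` or `k_{r+1} > l_{u+1}`
    (h3 : ∀ r' : Fin a, (r' : ℕ) = (r : ℕ) + 1 →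
        lv u > k r' ∧ ((u : ℕ) + 1 = b ∨ ∀ u' : Fin b, (u' : ℕ) = (u : ℕ) + 1 → k r' > lv u'))
    -- if `r = a` then `u = b`
    (h4 : (r : ℕ) + 1 = a → (u : ℕ) + 1 = b)
    -- `l_s, l_{s+1}, …, l_{v-1}` all belong to `I`
    (h5 : ∀ m : Fin b, s ≤ m → m < v → lv m ∈ I)
    -- `l_v` belongs to `J`
    (h6 : lv v ∈ J) :
    numInv (Fin.append i (Function.update k r (lv v))) + ((v : ℕ) - (s : ℕ))
      = numInv (Fin.append i k) := by
  classical
  set c : Fin (l + a) → ℕ := Fin.append i k with hc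
  set p0 : Fin (l + a) := Fin.natAdd l r with hp0
  -- basic facts
  have hcp0 : c p0 = k r := Fin.append_right i k r
  have hmemI : ∀ x, x ∈ I ↔ ∃ m, i m = x := by
    intro x
    rw [← hiI, Finset.mem_image]
    simp
  have hmemLv : ∀ x, x ∈ Finset.image lv Finset.univ ↔ ∃ m, lv m = x := by
    intro x; rw [Finset.mem_image]; simp
  have hlvvk : ∀ j : Fin a, lv v ≠ k j := by
    intro j h
    have : lv v ∈ (I ∪ J) \ Finset.image k Finset.univ := by
      rw [← hlvIJ, hmemLv]; exact ⟨v, rfl⟩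
    rw [Finset.mem_sdiff] at this
    exact this.2 (h ▸ Finset.mem_image.2 ⟨j, Finset.mem_univ j, rfl⟩)
  have hIk : ∀ x ∈ I, ∀ j : Fin a, x ≠ k j := by
    intro x hx j h
    exact (Finset.disjoint_left.1 hdisj hx) (h ▸ hkJ j)
  have hIlv : ∀ x ∈ I, ∃ m, lv m = x := by
    intro x hx
    have : x ∈ (I ∪ J) \ Finset.image k Finset.univ := by
      rw [Finset.mem_sdiff]
      refine ⟨Finset.mem_union_left _ hx, fun hmem => ?_⟩
      obtain ⟨j, _, hj⟩ := Finset.mem_image.1 hmem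
      exact hIk x hx j hj.symm
    rw [← hlvIJ, hmemLv] at this
    exact this
  have hlvvs : lv v < k r := lt_trans (hlv hsv) h1
  -- value at any position is in I or is some k j
  have hcval : ∀ p : Fin (l + a), (c p ∈ I) ∨ (∃ j : Fin a, c p = k j) := by
    intro p
    refine Fin.addCases (fun m => ?_) (fun j => ?_) p
    · left; rw [hc, Fin.append_left]; exact (hmemI _).2 ⟨m, rfl⟩
    · right; exact ⟨j, Fin.append_right i k j⟩
  have hcne : ∀ p : Fin (l + a), c p ≠ lv v := by
    intro p hp
    rcases hcval p with h | ⟨j, hj⟩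
    · rw [hp] at h
      exact (Finset.disjoint_left.1 hdisj h) h6
    · rw [hp] at hj
      exact hlvvk j hj
  -- rewrite LHS
  rw [append_update, ← hp0, ← hc]
  -- positions after p0 hold k j with j > r
  have hafter : ∀ q : Fin (l + a), p0 < q → ∃ j : Fin a, r < j ∧ c q = k j := by
    intro q hq
    revert hq
    refine Fin.addCases (fun m => ?_) (fun j => ?_) q <;> intro hq
    · exfalso
      rw [Fin.lt_def] at hq
      simp only [hp0, Fin.coe_natAdd, Fin.coe_castAdd] at hq
      omega
    · refine ⟨j, ?_, Fin.append_right i k j⟩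
      rw [Fin.lt_def] at hq ⊢
      simp only [hp0, Fin.coe_natAdd] at hq
      omega
  refine numInv_update c p0 (lv v) _ ?_ ?_ ?_
  · -- hR
    intro q hq hlt
    obtain ⟨j, hrj, hj⟩ := hafter q hq
    rw [hcp0, hj] at hlt
    exact absurd hlt (not_lt.2 (le_of_lt (hk hrj)))
  · -- hR'
    intro q hq hlt
    obtain ⟨j, hrj, hj⟩ := hafter q hq
    have hr1 : (r : ℕ) + 1 < a := by
      have := j.isLt
      have := hrj
      rw [Fin.lt_def] at this
      omega
    set r' : Fin a := ⟨(r : ℕ) + 1, hr1⟩ with hr'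
    obtain ⟨hu, -⟩ := h3 r' rfl
    have hkj : k j ≤ k r' := by
      refine hk.antitone ?_
      rw [Fin.le_def, hr']
      rw [Fin.lt_def] at hrj
      simp only [Fin.val_mk]
      omega
    have hjlt : k j < lv v := lt_of_le_of_lt hkj (lt_of_lt_of_le hu (hlv.antitone hvu))
    rw [hj] at hlt
    exact lt_asymm hjlt hlt
  · -- the counting
    rw [hcp0]
    -- split the left filter
    have hsplit : Finset.univ.filter (fun p : Fin (l + a) => p < p0 ∧ c p < k r)
        = Finset.univ.filter (fun p : Fin (l + a) => p < p0 ∧ c p < lv v)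
          ∪ Finset.univ.filter (fun p : Fin (l + a) => p < p0 ∧ lv v < c p ∧ c p < k r) := by
      ext p
      simp only [Finset.mem_filter, Finset.mem_union, Finset.mem_univ, true_and]
      constructor
      · rintro ⟨hp, hck⟩
        rcases lt_trichotomy (c p) (lv v) with h | h | h
        · exact Or.inl ⟨hp, h⟩
        · exact absurd h (hcne p)
        · exact Or.inr ⟨hp, h, hck⟩
      · rintro (⟨hp, hck⟩ | ⟨hp, _, hck⟩)
        · exact ⟨hp, lt_trans hck hlvvs⟩
        · exact ⟨hp, hck⟩
    have hdisj2 : Disjoint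
        (Finset.univ.filter (fun p : Fin (l + a) => p < p0 ∧ c p < lv v))
        (Finset.univ.filter (fun p : Fin (l + a) => p < p0 ∧ lv v < c p ∧ c p < k r)) := by
      rw [Finset.disjoint_left]
      intro p hp hp'
      simp only [Finset.mem_filter] at hp hp'
      omega
    rw [hsplit, Finset.card_union_of_disjoint hdisj2]
    congr 1
    -- card of middle set = v - s
    have hleftI : ∀ p : Fin (l + a), p < p0 → c p < k r → c p ∈ I := by
      intro p
      refine Fin.addCases (fun m => ?_) (fun j => ?_) p <;> intro hp hck
      · rw [hc, Fin.append_left]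
        exact (hmemI _).2 ⟨m, rfl⟩
      · exfalso
        rw [hc, Fin.append_right] at hck
        rw [Fin.lt_def] at hp
        simp only [hp0, Fin.coe_natAdd, Fin.coe_castAdd] at hp
        have hjr : j < r := by rw [Fin.lt_def]; omega
        exact absurd hck (not_lt.2 (le_of_lt (hk hjr)))
    have hcinj : Function.Injective c := by
      intro p q
      refine Fin.addCases (fun m => ?_) (fun j => ?_) p <;>
        refine Fin.addCases (fun m' => ?_) (fun j' => ?_) q <;> intro hpq
      · rw [hc, Fin.append_left, Fin.append_left] at hpq
        exact congrArg _ (hi.injective hpq)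
      · rw [hc, Fin.append_left, Fin.append_right] at hpq
        exact absurd hpq (hIk (i m) ((hmemI _).2 ⟨m, rfl⟩) j')
      · rw [hc, Fin.append_right, Fin.append_left] at hpq
        exact absurd hpq.symm (hIk (i m') ((hmemI _).2 ⟨m', rfl⟩) j)
      · rw [hc, Fin.append_right, Fin.append_right] at hpq
        exact congrArg _ (hk.injective hpq)
    have himg : Finset.image c
        (Finset.univ.filter (fun p : Fin (l + a) => p < p0 ∧ lv v < c p ∧ c p < k r))
        = Finset.image lv (Finset.univ.filter (fun m' : Fin b => s ≤ m' ∧ m' < v)) := by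
      ext x
      simp only [Finset.mem_image, Finset.mem_filter, Finset.mem_univ, true_and]
      constructor
      · rintro ⟨p, ⟨hp, hxl, hxk⟩, rfl⟩
        have hxI : c p ∈ I := hleftI p hp hxk
        obtain ⟨m', hm'⟩ := hIlv _ hxI
        refine ⟨m', ⟨?_, ?_⟩, hm'⟩
        · by_contra hms
          push_neg at hms
          have hs0 : 0 < (s : ℕ) := by
            rw [Fin.lt_def] at hms; omega
          have hs' : (s : ℕ) - 1 < b := by omega
          have := h2 ⟨(s : ℕ) - 1, hs'⟩ (by simp; omega)
          have hle : lv m' ≥ lv ⟨(s : ℕ) - 1, hs'⟩ := by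
            refine hlv.antitone ?_
            rw [Fin.le_def]
            rw [Fin.lt_def] at hms
            simp
            omega
          rw [hm'] at hle
          omega
        · have : lv v < lv m' := hm' ▸ hxl
          exact hlv.lt_iff_gt.1 this
      · rintro ⟨m', ⟨hsm, hmv⟩, rfl⟩
        have hxI : lv m' ∈ I := h5 m' hsm hmv
        obtain ⟨m, hm⟩ := (hmemI _).1 hxI
        refine ⟨Fin.castAdd a m, ⟨?_, ?_, ?_⟩, ?_⟩
        · rw [Fin.lt_def]
          simp only [hp0, Fin.coe_natAdd, Fin.coe_castAdd]
          have := m.isLt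
          omega
        · rw [hc, Fin.append_left, hm]
          exact hlv hmv
        · rw [hc, Fin.append_left, hm]
          exact lt_of_le_of_lt (hlv.antitone hsm) h1
        · rw [hc, Fin.append_left, hm]
    have := congrArg Finset.card himg
    rw [Finset.card_image_of_injective _ hcinj,
        Finset.card_image_of_injective _ hlv.injective] at this
    rw [this]
    have : Finset.univ.filter (fun m' : Fin b => s ≤ m' ∧ m' < v) = Finset.Ico s v := by
      ext m'
      simp [Finset.mem_Ico]
    rw [this, Fin.card_Ico]
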